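/- Let c_1, ..., c_n be integers, and suppose 1 ≤ s ≤ u ≤ r ≤ n are such that c_u < c_{u+1} < ... < c_r, and (if s < u) c_r < c_s < c_{s+1} < ... < c_{u-1}, and no other c_i for i outside [s,r] changes. Let c' = (c_1,...,c_{s-1}, c_r, c_s,...,c_{r-1}, c_{r+1},...,c_n) be obtained by cyclically moving c_r to position s. Then inv(c) − inv(c') = 2u − (r + s), where inv(d) = |{(i,j) : i < j, d_i > d_j}| is the number of inversions of the sequence d. -/
import Mathlib


open Finset

/-- The inversion number of the finite integer sequence `d₁, ..., dₙ`:
the number of pairs `(i,j)` with `i < j` and `dᵢ > dⱼ`. -/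
def invNum (n : ℕ) (d : ℕ → ℤ) : ℕ :=
  ((Finset.Icc 1 n ×ˢ Finset.Icc 1 n).filter
    (fun p : ℕ × ℕ => p.1 < p.2 ∧ d p.2 < d p.1)).card

/-- The index map sending `r ↦ s`, `k ↦ k+1` for `s ≤ k < r`, identity elsewhere. -/
def cycTau (s r k : ℕ) : ℕ := if k = r then s else if s ≤ k ∧ k < r then k + 1 else k

/-- The inverse of `cycTau`: `s ↦ r`, `k ↦ k-1` for `s < k ≤ r`, identity elsewhere. -/
def cycSig (s r k : ℕ) : ℕ := if k = s then r else if s < k ∧ k ≤ r then k - 1 else k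

/-- Let `c₁, ..., cₙ` be integers and `1 ≤ s ≤ u ≤ r ≤ n` with `c_u < ... < c_r` and
(if `s < u`) `c_r < c_s < ... < c_{u-1}`.  If `c'` is obtained from `c` by cyclically
moving `c_r` to position `s`, then `inv(c) − inv(c') = 2u − (r + s)`. -/
theorem inversions_of_cycle (n : ℕ) (c c' : ℕ → ℤ) (s u r : ℕ)
    (hs : 1 ≤ s) (hsu : s ≤ u) (hur : u ≤ r) (hrn : r ≤ n)
    (hchain1 : ∀ k l : ℕ, u ≤ k → k < l → l ≤ r → c k < c l)
    (hchain2 : s < u → (c r < c s ∧ ∀ k l : ℕ, s ≤ k → k < l → l < u → c k < c l))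
    (hc'1 : ∀ k : ℕ, 1 ≤ k → k < s → c' k = c k)
    (hc's : c' s = c r)
    (hc'2 : ∀ k : ℕ, s < k → k ≤ r → c' k = c (k - 1))
    (hc'3 : ∀ k : ℕ, r < k → k ≤ n → c' k = c k) :
    (invNum n c : ℤ) - invNum n c' = 2 * u - (r + s) := by
  have hsr : s ≤ r := le_trans hsu hur
  -- basic facts about cycTau / cycSig
  have hst : ∀ k, cycSig s r (cycTau s r k) = k := by
    intro k; unfold cycTau cycSig; split_ifs <;> omega
  have hts : ∀ k, cycTau s r (cycSig s r k) = k := by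
    intro k; unfold cycSig cycTau; split_ifs <;> omega
  have htau_mem : ∀ k, 1 ≤ k → k ≤ n → 1 ≤ cycTau s r k ∧ cycTau s r k ≤ n := by
    intro k h1 h2; unfold cycTau; split_ifs <;> omega
  have hsig_mem : ∀ k, 1 ≤ k → k ≤ n → 1 ≤ cycSig s r k ∧ cycSig s r k ≤ n := by
    intro k h1 h2; unfold cycSig; split_ifs <;> omega
  have htau_lt : ∀ i j, i < j → ¬(j = r ∧ s ≤ i) → cycTau s r i < cycTau s r j := by
    intro i j hij h; unfold cycTau; split_ifs <;> omega
  have hsig_lt : ∀ i j, i < j → ¬(i = s ∧ j ≤ r) → cycSig s r i < cycSig s r j := by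
    intro i j hij h; unfold cycSig; split_ifs <;> omega
  have htau_eq_s : ∀ k, cycTau s r k = s → k = r := by
    intro k; unfold cycTau; split_ifs <;> omega
  have hsig_eq_r : ∀ k, cycSig s r k = r → k = s := by
    intro k; unfold cycSig; split_ifs <;> omega
  have htau_big : ∀ k, r < k → cycTau s r k = k := by
    intro k hk; unfold cycTau; split_ifs <;> omega
  have hsig_small : ∀ k, k < s → cycSig s r k = k := by
    intro k hk; unfold cycSig; split_ifs <;> omega
  -- values of c' along cycTau
  have hc'tau : ∀ k, 1 ≤ k → k ≤ n → c' (cycTau s r k) = c k := by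
    intro k hk1 hkn
    unfold cycTau
    split_ifs with h1 h2
    · subst h1; exact hc's
    · rw [hc'2 (k + 1) (by omega) (by omega)]; simp
    · rcases lt_or_ge k s with h | h
      · exact hc'1 k hk1 h
      · exact hc'3 k (by omega) hkn
  have hcsig : ∀ k, 1 ≤ k → k ≤ n → c (cycSig s r k) = c' k := by
    intro k hk1 hkn
    have h1 := hsig_mem k hk1 hkn
    have h2 := hc'tau (cycSig s r k) h1.1 h1.2
    rw [hts] at h2; exact h2.symm
  -- the four pieces
  set A : Finset (ℕ × ℕ) := Finset.Icc 1 n ×ˢ Finset.Icc 1 n with hA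
  set T : Finset (ℕ × ℕ) :=
    A.filter (fun p => (p.1 < p.2 ∧ c p.2 < c p.1) ∧ ¬(p.2 = r ∧ s ≤ p.1)) with hT
  set F : Finset (ℕ × ℕ) :=
    A.filter (fun p => (p.1 < p.2 ∧ c p.2 < c p.1) ∧ (p.2 = r ∧ s ≤ p.1)) with hF
  set T' : Finset (ℕ × ℕ) :=
    A.filter (fun p => (p.1 < p.2 ∧ c' p.2 < c' p.1) ∧ ¬(p.1 = s ∧ p.2 ≤ r)) with hT'
  set F' : Finset (ℕ × ℕ) :=
    A.filter (fun p => (p.1 < p.2 ∧ c' p.2 < c' p.1) ∧ (p.1 = s ∧ p.2 ≤ r)) with hF'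
  -- splitting
  have hsplit : invNum n c = F.card + T.card := by
    have h := Finset.card_filter_add_card_filter_not
      (s := A.filter (fun p : ℕ × ℕ => p.1 < p.2 ∧ c p.2 < c p.1))
      (fun p : ℕ × ℕ => p.2 = r ∧ s ≤ p.1)
    rw [Finset.filter_filter, Finset.filter_filter] at h
    rw [invNum, ← hA, ← h, ← hF, ← hT]
  have hsplit' : invNum n c' = F'.card + T'.card := by
    have h := Finset.card_filter_add_card_filter_not
      (s := A.filter (fun p : ℕ × ℕ => p.1 < p.2 ∧ c' p.2 < c' p.1))
      (fun p : ℕ × ℕ => p.1 = s ∧ p.2 ≤ r)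
    rw [Finset.filter_filter, Finset.filter_filter] at h
    rw [invNum, ← hA, ← h, ← hF', ← hT']
  -- card of F
  have hFcard : F.card = u - s := by
    have : F = (Finset.Icc s (u - 1)).image (fun i => (i, r)) := by
      ext p
      simp only [hF, hA, Finset.mem_filter, Finset.mem_product, Finset.mem_Icc,
        Finset.mem_image]
      constructor
      · rintro ⟨⟨⟨h11, h12⟩, h21, h22⟩, ⟨hlt, hcv⟩, h2r, hsi⟩
        refine ⟨p.1, ⟨hsi, ?_⟩, ?_⟩
        · -- p.1 < u, else chain1 contradicts
          by_contra hcon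
          have hu : u ≤ p.1 := by omega
          have := hchain1 p.1 r (by omega) (by omega) le_rfl
          rw [h2r] at hcv
          omega
        · rw [← h2r]
      · rintro ⟨i, ⟨hi1, hi2⟩, hp⟩
        have hiu : i < u := by omega
        have hsltu : s < u := by omega
        obtain ⟨hrs, hchain⟩ := hchain2 hsltu
        have hci : c r < c i := by
          rcases eq_or_lt_of_le hi1 with h | h
          · rw [← h]; exact hrs
          · exact lt_trans hrs (hchain s i le_rfl h hiu)
        subst hp
        exact ⟨⟨⟨by omega, by omega⟩, by omega, by omega⟩, ⟨by omega, hci⟩, rfl, hi1⟩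
    rw [this, Finset.card_image_of_injective _ (fun a b h => by simpa using h), Nat.card_Icc]
    omega
  -- card of F'
  have hF'card : F'.card = r - u := by
    have : F' = (Finset.Icc (u + 1) r).image (fun j => (s, j)) := by
      ext p
      simp only [hF', hA, Finset.mem_filter, Finset.mem_product, Finset.mem_Icc,
        Finset.mem_image]
      constructor
      · rintro ⟨⟨⟨h11, h12⟩, h21, h22⟩, ⟨hlt, hcv⟩, h1s, h2r⟩
        refine ⟨p.2, ⟨?_, h2r⟩, ?_⟩
        · -- u + 1 ≤ p.2
          by_contra hcon
          have h2u : p.2 ≤ u := by omega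
          have hsp : s < p.2 := by rw [← h1s]; exact hlt
          have hc'p2 : c' p.2 = c (p.2 - 1) := hc'2 p.2 hsp h2r
          have hslt : s < u := by omega
          obtain ⟨hrs, hchain⟩ := hchain2 hslt
          have : c r < c (p.2 - 1) := by
            rcases eq_or_lt_of_le (show s ≤ p.2 - 1 by omega) with h | h
            · rw [← h]; exact hrs
            · exact lt_trans hrs (hchain s (p.2 - 1) le_rfl h (by omega))
          rw [hc'p2, h1s, hc's] at hcv
          omega
        · rw [← h1s]
      · rintro ⟨j, ⟨hj1, hj2⟩, hp⟩
        have hc'j : c' j = c (j - 1) := hc'2 j (by omega) hj2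
        have : c (j - 1) < c r := hchain1 (j - 1) r (by omega) (by omega) le_rfl
        subst hp
        refine ⟨⟨⟨by omega, by omega⟩, by omega, by omega⟩, ⟨by omega, ?_⟩, rfl, hj2⟩
        rw [hc'j, hc's]; exact this
    rw [this, Finset.card_image_of_injective _ (fun a b h => by simpa using h), Nat.card_Icc]
    omega
  -- the bijection between T and T'
  have hTT' : T.card = T'.card := by
    apply Finset.card_bij' (fun p _ => (cycTau s r p.1, cycTau s r p.2))
      (fun q _ => (cycSig s r q.1, cycSig s r q.2))
    · -- maps into T'
      intro p hp
      simp only [hT, hT', hA, Finset.mem_filter, Finset.mem_product, Finset.mem_Icc] at hp ⊢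
      obtain ⟨⟨⟨h11, h12⟩, h21, h22⟩, ⟨hlt, hcv⟩, hnf⟩ := hp
      have hm1 := htau_mem p.1 h11 h12
      have hm2 := htau_mem p.2 h21 h22
      refine ⟨⟨hm1, hm2⟩, ⟨htau_lt _ _ hlt hnf, ?_⟩, ?_⟩
      · rw [hc'tau p.1 h11 h12, hc'tau p.2 h21 h22]; exact hcv
      · rintro ⟨he, hle⟩
        have h1r : p.1 = r := htau_eq_s _ he
        have : cycTau s r p.2 = p.2 := htau_big p.2 (by omega)
        omega
    · -- maps back into T
      intro q hq
      simp only [hT, hT', hA, Finset.mem_filter, Finset.mem_product, Finset.mem_Icc] at hq ⊢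
      obtain ⟨⟨⟨h11, h12⟩, h21, h22⟩, ⟨hlt, hcv⟩, hnf⟩ := hq
      have hm1 := hsig_mem q.1 h11 h12
      have hm2 := hsig_mem q.2 h21 h22
      refine ⟨⟨hm1, hm2⟩, ⟨hsig_lt _ _ hlt hnf, ?_⟩, ?_⟩
      · rw [hcsig q.1 h11 h12, hcsig q.2 h21 h22]; exact hcv
      · rintro ⟨he, hle⟩
        have h2s : q.2 = s := hsig_eq_r _ he
        have : cycSig s r q.1 = q.1 := hsig_small q.1 (by omega)
        omega
    · intro p _; exact Prod.ext (hst p.1) (hst p.2)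
    · intro q _; exact Prod.ext (hts q.1) (hts q.2)
  -- conclude
  rw [hsplit, hsplit', hFcard, hF'card, hTT']
  push_cast
  omega
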